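/- Abstract additive Schwarz bound (Dryja–Widlund): Let X be a finite-dimensional real vector space with SPD bilinear form a and operator A : X → X' defined by a(u,v) = ⟨Au, v⟩. Suppose X = X₁ + ... + X_M, b_k is an SPD bilinear form on X_k, and the preconditioner B : X' → X sends r to u = Σ u_k where each u_k ∈ X_k solves b_k(u_k, y_k) = ⟨r, y_k⟩ for all y_k ∈ X_k. If (i) every u ∈ X admits a decomposition u = Σ u_k with Σ ‖u_k‖_{b_k}² ≤ C₀‖u‖_a², (ii) ‖u_k‖_a² ≤ ω‖u_k‖_{b_k}² for all u_k ∈ X_k, and (iii) a(u_i, u_j) ≤ e_{ij}‖u_i‖_a‖u_j‖_a for all u_i ∈ X_i, u_j ∈ X_j with E = (e_{ij}) symmetric, then all eigenvalues of BA are real positive and λ_max(BA)/λ_min(BA) ≤ C₀ ω ρ(E), where ρ(E) is the spectral radius of E. -/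

import Mathlib

open Finset Matrix

/-- Cauchy–Schwarz for a bilinear form nonnegative on the span of `x, y`. -/
lemma bilin_cauchy_schwarz {X : Type*} [AddCommGroup X] [Module ℝ X]
    (φ : X →ₗ[ℝ] X →ₗ[ℝ] ℝ) (x y : X) (hsy : φ x y = φ y x)
    (h : ∀ t : ℝ, 0 ≤ φ (x + t • y) (x + t • y)) :
    φ x y ≤ Real.sqrt (φ x x) * Real.sqrt (φ y y) := by
  have hexp : ∀ t : ℝ, φ (x + t • y) (x + t • y)
      = φ y y * (t * t) + (2 * φ x y) * t + φ x x := by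
    intro t
    simp only [map_add, _root_.map_smul, LinearMap.add_apply, LinearMap.smul_apply,
      smul_eq_mul]
    rw [hsy]; ring
  have hd : discrim (φ y y) (2 * φ x y) (φ x x) ≤ 0 :=
    discrim_le_zero (fun t => by rw [← hexp t]; exact h t)
  rw [discrim] at hd
  have hsq : φ x y ^ 2 ≤ φ x x * φ y y := by nlinarith
  have hxx : 0 ≤ φ x x := by simpa using h 0
  calc φ x y ≤ |φ x y| := le_abs_self _
    _ = Real.sqrt ((φ x y) ^ 2) := (Real.sqrt_sq_eq_abs _).symm
    _ ≤ Real.sqrt (φ x x * φ y y) := Real.sqrt_le_sqrt hsq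
    _ = Real.sqrt (φ x x) * Real.sqrt (φ y y) := Real.sqrt_mul hxx _

/-- Rayleigh-quotient bound for a real symmetric matrix whose eigenvalues are
bounded in absolute value by `ρ`. -/
lemma rayleigh_bound {M : ℕ} (E : Matrix (Fin M) (Fin M) ℝ) (hEsymm : E.IsSymm) (ρ : ℝ)
    (hρ : ∀ μ : ℝ, Module.End.HasEigenvalue (Matrix.toLin' E) μ → |μ| ≤ ρ)
    (v : Fin M → ℝ) :
    v ⬝ᵥ (E *ᵥ v) ≤ ρ * (v ⬝ᵥ v) := by
  have hherm : E.IsHermitian := by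
    ext i j
    simpa [Matrix.conjTranspose_apply] using (hEsymm.apply j i).symm
  have hlam : ∀ i, hherm.eigenvalues i ≤ ρ := by
    intro i
    have hvec : (Matrix.toLin' E) (⇑(hherm.eigenvectorBasis i))
        = hherm.eigenvalues i • ⇑(hherm.eigenvectorBasis i) := by
      rw [Matrix.toLin'_apply]
      exact hherm.mulVec_eigenvectorBasis i
    have hne : (⇑(hherm.eigenvectorBasis i) : Fin M → ℝ) ≠ 0 := by
      intro h0
      exact hherm.eigenvectorBasis.orthonormal.ne_zero i (by ext j; exact congrFun h0 j)
    have : Module.End.HasEigenvalue (Matrix.toLin' E) (hherm.eigenvalues i) :=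
      Module.End.hasEigenvalue_of_hasEigenvector
        ⟨Module.End.mem_eigenspace_iff.mpr hvec, hne⟩
    exact (abs_le.mp (hρ _ this)).2
  set U : Matrix (Fin M) (Fin M) ℝ := (hherm.eigenvectorUnitary : Matrix (Fin M) (Fin M) ℝ) with hU
  set w : Fin M → ℝ := star U *ᵥ v with hw
  have hUU : U * star U = 1 := Matrix.mem_unitaryGroup_iff.mp hherm.eigenvectorUnitary.2
  have hstarU : (star U : Matrix (Fin M) (Fin M) ℝ) = Uᵀ := by
    ext i j; simp [Matrix.conjTranspose_apply]
  have hdot : ∀ z : Fin M → ℝ, v ⬝ᵥ (U *ᵥ z) = w ⬝ᵥ z := by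
    intro z
    rw [dotProduct_mulVec, hw, hstarU, Matrix.mulVec_transpose]
  have hdiag : Matrix.diagonal ((RCLike.ofReal ∘ hherm.eigenvalues) : Fin M → ℝ)
      = Matrix.diagonal hherm.eigenvalues := by
    congr 1
  have hE2 : E *ᵥ v = U *ᵥ ((Matrix.diagonal hherm.eigenvalues) *ᵥ w) := by
    conv_lhs => rw [hherm.spectral_theorem, Unitary.conjStarAlgAut_apply]
    rw [← Matrix.mulVec_mulVec, ← Matrix.mulVec_mulVec, hdiag, hw]
  have h1 : v ⬝ᵥ (E *ᵥ v) = ∑ i, hherm.eigenvalues i * (w i * w i) := by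
    rw [hE2, hdot]
    simp only [dotProduct, Matrix.mulVec_diagonal]
    exact Finset.sum_congr rfl fun i _ => by ring
  have h2 : v ⬝ᵥ v = ∑ i, w i * w i := by
    have : v ⬝ᵥ (U *ᵥ (star U *ᵥ v)) = v ⬝ᵥ v := by
      rw [Matrix.mulVec_mulVec, hUU, Matrix.one_mulVec]
    rw [← this, hdot]
    rfl
  rw [h1, h2, Finset.mul_sum]
  exact Finset.sum_le_sum fun i _ =>
    mul_le_mul_of_nonneg_right (hlam i) (mul_self_nonneg _)

set_option maxHeartbeats 1600000 in
/-- Abstract additive Schwarz bound of Dryja–Widlund: under the stable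
decomposition (i), local stability (ii) and strengthened Cauchy inequalities
(iii), all eigenvalues of the preconditioned operator `B ∘ A` are positive and
`λ_max/λ_min ≤ C₀ · ω · ρ(E)`. -/
theorem additive_schwarz_condition_bound
    {X : Type*} [AddCommGroup X] [Module ℝ X] [FiniteDimensional ℝ X]
    {M : ℕ}
    (a : X →ₗ[ℝ] X →ₗ[ℝ] ℝ)
    (hsymm : ∀ u v : X, a u v = a v u)
    (hpd : ∀ x : X, x ≠ 0 → 0 < a x x)
    (Xk : Fin M → Submodule ℝ X)
    (hspan : (⨆ k, Xk k) = ⊤)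
    (b : Fin M → (X →ₗ[ℝ] X →ₗ[ℝ] ℝ))
    (hbsymm : ∀ k, ∀ x ∈ Xk k, ∀ y ∈ Xk k, b k x y = b k y x)
    (hbpd : ∀ k, ∀ x ∈ Xk k, x ≠ 0 → 0 < b k x x)
    (A : X →ₗ[ℝ] Module.Dual ℝ X) (hA : ∀ x y : X, A x y = a x y)
    (B : Module.Dual ℝ X →ₗ[ℝ] X)
    (usol : Module.Dual ℝ X → Fin M → X)
    (husol_mem : ∀ r k, usol r k ∈ Xk k)
    (husol_eq : ∀ r k, ∀ y ∈ Xk k, b k (usol r k) y = r y)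
    (hB : ∀ r, B r = ∑ k, usol r k)
    (C₀ ω ρ : ℝ)
    (hC₀ : ∀ x : X, ∃ u : Fin M → X, (∀ k, u k ∈ Xk k) ∧ x = ∑ k, u k ∧
      ∑ k, b k (u k) (u k) ≤ C₀ * a x x)
    (hω : ∀ k, ∀ x ∈ Xk k, a x x ≤ ω * b k x x)
    (E : Matrix (Fin M) (Fin M) ℝ) (hEsymm : E.IsSymm)
    (hE : ∀ i j, ∀ x ∈ Xk i, ∀ y ∈ Xk j,
      a x y ≤ E i j * Real.sqrt (a x x) * Real.sqrt (a y y))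
    (hρ : ∀ μ : ℝ, Module.End.HasEigenvalue (Matrix.toLin' E) μ → |μ| ≤ ρ) :
    (∀ μ : ℝ, Module.End.HasEigenvalue (B ∘ₗ A : Module.End ℝ X) μ → 0 < μ) ∧
    (∀ μ ν : ℝ, Module.End.HasEigenvalue (B ∘ₗ A : Module.End ℝ X) μ →
      Module.End.HasEigenvalue (B ∘ₗ A : Module.End ℝ X) ν →
        μ ≤ C₀ * ω * ρ * ν) := by
  classical
  have anonneg : ∀ z : X, 0 ≤ a z z := by
    intro z
    by_cases hz : z = 0
    · simp [hz]
    · exact (hpd z hz).le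
  have bnonneg : ∀ k : Fin M, ∀ z ∈ Xk k, 0 ≤ b k z z := by
    intro k z hz
    by_cases h0 : z = 0
    · simp [h0]
    · exact (hbpd k z hz h0).le
  have key : ∀ μ : ℝ, Module.End.HasEigenvalue (B ∘ₗ A : Module.End ℝ X) μ →
      0 < μ ∧ 1 ≤ C₀ * μ ∧ μ ≤ ω * ρ := by
    intro μ hμ
    obtain ⟨x, hx⟩ := hμ.exists_hasEigenvector
    have hx0 : x ≠ 0 := hx.2
    have hxeq : B (A x) = μ • x := by
      have h := hx.apply_eq_smul
      simpa [LinearMap.comp_apply] using h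
    set t : Fin M → X := fun k => usol (A x) k with ht
    have htmem : ∀ k, t k ∈ Xk k := fun k => husol_mem _ k
    have htsum : ∑ k, t k = μ • x := by rw [← hxeq, hB]
    have hbt : ∀ k : Fin M, ∀ y ∈ Xk k, b k (t k) y = a x y := by
      intro k y hy
      rw [ht]
      rw [husol_eq _ _ y hy, hA]
    have hspos : 0 < a x x := hpd x hx0
    -- key identity : ∑ b k (t k) (t k) = μ * a x x
    have hid : ∑ k, b k (t k) (t k) = μ * a x x := by
      calc ∑ k, b k (t k) (t k) = ∑ k, a x (t k) :=
            Finset.sum_congr rfl (fun k _ => hbt k (t k) (htmem k))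
        _ = a x (∑ k, t k) := (map_sum (a x) _ _).symm
        _ = a x (μ • x) := by rw [htsum]
        _ = μ * a x x := by rw [(a x).map_smul]; simp [smul_eq_mul]
    have hμs : 0 ≤ μ * a x x := by
      rw [← hid]
      exact Finset.sum_nonneg (fun k _ => bnonneg k _ (htmem k))
    -- lower bound via stable decomposition
    obtain ⟨u, humem, hudec, hubound⟩ := hC₀ x
    have hsle : a x x ≤ Real.sqrt (μ * a x x) * Real.sqrt (C₀ * a x x) := by
      have hcs : ∀ k : Fin M, b k (t k) (u k) ≤
          Real.sqrt (b k (t k) (t k)) * Real.sqrt (b k (u k) (u k)) := by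
        intro k
        apply bilin_cauchy_schwarz
        · exact hbsymm k _ (htmem k) _ (humem k)
        · intro τ
          exact bnonneg k _ (Submodule.add_mem _ (htmem k)
            (Submodule.smul_mem _ _ (humem k)))
      calc a x x = a x (∑ k, u k) := by rw [← hudec]
        _ = ∑ k, a x (u k) := map_sum (a x) _ _
        _ = ∑ k, b k (t k) (u k) :=
            Finset.sum_congr rfl (fun k _ => (hbt k (u k) (humem k)).symm)
        _ ≤ ∑ k, Real.sqrt (b k (t k) (t k)) * Real.sqrt (b k (u k) (u k)) :=
            Finset.sum_le_sum (fun k _ => hcs k)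
        _ ≤ Real.sqrt (∑ k, b k (t k) (t k)) * Real.sqrt (∑ k, b k (u k) (u k)) :=
            Real.sum_sqrt_mul_sqrt_le _ (fun k => bnonneg k _ (htmem k))
              (fun k => bnonneg k _ (humem k))
        _ ≤ Real.sqrt (μ * a x x) * Real.sqrt (C₀ * a x x) := by
            rw [hid]
            exact mul_le_mul_of_nonneg_left (Real.sqrt_le_sqrt hubound)
              (Real.sqrt_nonneg _)
    have hsqB : 0 < Real.sqrt (C₀ * a x x) := by
      nlinarith [Real.sqrt_nonneg (μ * a x x), Real.sqrt_nonneg (C₀ * a x x), hsle, hspos]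
    have hsqA : 0 < Real.sqrt (μ * a x x) := by
      nlinarith [Real.sqrt_nonneg (μ * a x x), hsle, hspos, hsqB.le]
    have hC₀s : 0 < C₀ * a x x := Real.sqrt_pos.mp hsqB
    have hμspos : 0 < μ * a x x := Real.sqrt_pos.mp hsqA
    have hμpos : 0 < μ := by nlinarith [hμspos, hspos]
    have hsq2 : a x x * a x x ≤ (μ * a x x) * (C₀ * a x x) := by
      have h2 := mul_self_le_mul_self hspos.le hsle
      have h3 : Real.sqrt (μ * a x x) * Real.sqrt (μ * a x x) = μ * a x x :=
        Real.mul_self_sqrt hμs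
      have h4 : Real.sqrt (C₀ * a x x) * Real.sqrt (C₀ * a x x) = C₀ * a x x :=
        Real.mul_self_sqrt hC₀s.le
      nlinarith [h2, h3, h4]
    have hlow : 1 ≤ C₀ * μ := by nlinarith [hsq2, hspos, mul_pos hspos hspos]
    -- upper bound
    have hTT : a (∑ k, t k) (∑ k, t k) = μ ^ 2 * a x x := by
      rw [htsum]
      simp only [_root_.map_smul, LinearMap.smul_apply, smul_eq_mul]
      ring
    have hdouble : a (∑ k, t k) (∑ k, t k) = ∑ i, ∑ j, a (t i) (t j) := by
      have e1 : a (∑ k, t k) = ∑ k, a (t k) := map_sum a _ Finset.univ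
      rw [e1, LinearMap.sum_apply]
      exact Finset.sum_congr rfl (fun i _ => map_sum (a (t i)) _ _)
    have hEbound : ∑ i, ∑ j, a (t i) (t j) ≤
        (fun k => Real.sqrt (a (t k) (t k))) ⬝ᵥ (E *ᵥ fun k => Real.sqrt (a (t k) (t k))) := by
      have hrw : (fun k => Real.sqrt (a (t k) (t k))) ⬝ᵥ
          (E *ᵥ fun k => Real.sqrt (a (t k) (t k)))
          = ∑ i, ∑ j, E i j * Real.sqrt (a (t i) (t i)) * Real.sqrt (a (t j) (t j)) := by
        simp only [dotProduct, Matrix.mulVec, Finset.mul_sum]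
        exact Finset.sum_congr rfl fun i _ => Finset.sum_congr rfl fun j _ => by ring
      rw [hrw]
      exact Finset.sum_le_sum fun i _ => Finset.sum_le_sum fun j _ =>
        hE i j _ (htmem i) _ (htmem j)
    have hray := rayleigh_bound E hEsymm ρ hρ (fun k => Real.sqrt (a (t k) (t k)))
    have hsvsv : (fun k => Real.sqrt (a (t k) (t k))) ⬝ᵥ (fun k => Real.sqrt (a (t k) (t k)))
        = ∑ k, a (t k) (t k) := by
      simp only [dotProduct]
      exact Finset.sum_congr rfl fun k _ => Real.mul_self_sqrt (anonneg _)
    have hchain : μ ^ 2 * a x x ≤ ρ * ∑ k, a (t k) (t k) := by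
      rw [← hTT, hdouble]
      calc ∑ i, ∑ j, a (t i) (t j)
          ≤ (fun k => Real.sqrt (a (t k) (t k))) ⬝ᵥ
            (E *ᵥ fun k => Real.sqrt (a (t k) (t k))) := hEbound
        _ ≤ ρ * ((fun k => Real.sqrt (a (t k) (t k))) ⬝ᵥ
            (fun k => Real.sqrt (a (t k) (t k)))) := hray
        _ = ρ * ∑ k, a (t k) (t k) := by rw [hsvsv]
    have hSanneg : 0 ≤ ∑ k, a (t k) (t k) := Finset.sum_nonneg fun k _ => anonneg _
    have hμ2 : 0 < μ ^ 2 * a x x := mul_pos (pow_pos hμpos 2) hspos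
    have hρpos : 0 < ρ := by nlinarith [hchain, hμ2, hSanneg]
    have hSaSb : ∑ k, a (t k) (t k) ≤ ω * (μ * a x x) := by
      rw [← hid]
      calc ∑ k, a (t k) (t k) ≤ ∑ k, ω * b k (t k) (t k) :=
            Finset.sum_le_sum fun k _ => hω k _ (htmem k)
        _ = ω * ∑ k, b k (t k) (t k) := (Finset.mul_sum _ _ _).symm
    have hup : μ ≤ ω * ρ := by
      nlinarith [hchain, mul_le_mul_of_nonneg_left hSaSb hρpos.le, hμspos, hμpos, hspos]
    exact ⟨hμpos, hlow, hup⟩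
  refine ⟨fun μ hμ => (key μ hμ).1, fun μ ν hμ hν => ?_⟩
  obtain ⟨hμp, hμl, hμu⟩ := key μ hμ
  obtain ⟨hνp, hνl, hνu⟩ := key ν hν
  have hωρ : 0 < ω * ρ := lt_of_lt_of_le hμp hμu
  nlinarith [hμu, mul_le_mul_of_nonneg_left hνl hωρ.le]
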